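/- arXiv:0809.3225 — 5 statements merged into one kernel-verified Lean document; each statement's English description precedes it below -/
import Mathlib

section
/- For every n ≥ 1, the full symmetrizer T_{S_n} = (1/n!) ∑_{σ∈S_n} σ maps every stable multiaffine polynomial in ℂ[z_1,…,z_n] to a stable polynomial. -/
section AnalyticAux

open Polynomial


lemma inv_disk {w : ℂ} {y : ℝ} (hy : 0 < y) (hw : w ≠ 0) :
    ‖w⁻¹ + Complex.I / (2*(y:ℂ))‖ ≤ 1/(2*y) ↔ y ≤ w.im := by
  have h2y' : (2*(y:ℂ)) ≠ 0 := by
    simp only [ne_eq, mul_eq_zero, OfNat.ofNat_ne_zero, false_or, Complex.ofReal_eq_zero]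
    exact_mod_cast hy.ne'
  have key : w⁻¹ + Complex.I / (2*(y:ℂ)) = ((2*(y:ℂ)) + Complex.I * w) / ((2*(y:ℂ)) * w) := by
    rw [add_div, div_mul_cancel_left₀ h2y',
      mul_div_mul_right _ _ hw, inv_eq_one_div]
  rw [key, norm_div, norm_mul, div_le_iff₀ (mul_pos (norm_pos_iff.2 h2y') (norm_pos_iff.2 hw))]
  have hn2y : ‖(2*(y:ℂ))‖ = 2*y := by
    rw [show (2*(y:ℂ)) = ((2*y : ℝ):ℂ) by push_cast; ring, Complex.norm_real,
      Real.norm_eq_abs, abs_of_pos (by linarith)]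
  rw [hn2y, show 1/(2*y) * (2*y * ‖w‖) = ‖w‖ by field_simp]
  have habs : ∀ u : ℂ, ‖u‖ = Real.sqrt (Complex.normSq u) := fun u => by
    rw [Complex.norm_def]
  rw [habs, habs, Real.sqrt_le_sqrt_iff (Complex.normSq_nonneg _)]
  have hA : Complex.normSq ((2*(y:ℂ)) + Complex.I * w) = (2*y - w.im)^2 + w.re^2 := by
    simp [Complex.normSq_apply]; ring
  have hw' : Complex.normSq w = w.re^2 + w.im^2 := by simp [Complex.normSq_apply]; ring
  rw [hA, hw']
  constructor
  · intro h; nlinarith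
  · intro h; nlinarith

lemma eval_derivative_multiset_prod (a : ℂ) (s : Multiset ℂ) (z : ℂ) (hz : ∀ r ∈ s, z ≠ r) :
    Polynomial.eval z (derivative (C a * (s.map fun r => X - C r).prod))
      = Polynomial.eval z (C a * (s.map fun r => X - C r).prod) * (s.map fun r => (z - r)⁻¹).sum := by
  induction s using Multiset.induction with
  | empty => simp
  | cons r s ih =>
    have hzr : z - r ≠ 0 := sub_ne_zero.2 (hz r (Multiset.mem_cons_self r s))
    have ih' := ih (fun r' hr' => hz r' (Multiset.mem_cons_of_mem hr'))
    simp only [Multiset.map_cons, Multiset.prod_cons, Multiset.sum_cons]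
    have : C a * ((X - C r) * (s.map fun r => X - C r).prod)
        = (X - C r) * (C a * (s.map fun r => X - C r).prod) := by ring
    rw [this, derivative_mul]
    simp only [derivative_sub, derivative_X, derivative_C, sub_zero, one_mul]
    rw [eval_add, eval_mul, eval_mul, eval_sub, eval_X, eval_C, ih']
    simp only [eval_mul, eval_sub, eval_X, eval_C]
    field_simp

lemma laguerre {N : ℕ} (hN : 1 ≤ N) (Q : Polynomial ℂ) (hQ0 : Q ≠ 0)
    (hdeg : Q.natDegree ≤ N) (hst : ∀ u : ℂ, 0 < u.im → Q.eval u ≠ 0)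
    {t z : ℂ} (ht : 0 < t.im) (hz : 0 < z.im) :
    (N : ℂ) * Q.eval z + (t - z) * Q.derivative.eval z ≠ 0 := by
  intro hcontra
  set y := z.im with hy
  have hsplit := IsAlgClosed.splits Q
  have hfac := hsplit.eq_prod_roots
  have hcard : Q.roots.card = Q.natDegree := (Polynomial.splits_iff_card_roots).mp hsplit
  have hroots : ∀ r ∈ Q.roots, r.im ≤ 0 := by
    intro r hr
    by_contra h
    exact hst r (lt_of_not_ge h) ((Polynomial.mem_roots hQ0).mp hr)
  have hzr : ∀ r ∈ Q.roots, z ≠ r := by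
    intro r hr heq
    exact absurd (heq ▸ hz) (not_lt.2 (hroots r hr))
  have hQz : Q.eval z ≠ 0 := hst z hz
  -- logarithmic derivative
  set S : ℂ := (Q.roots.map fun r => (z - r)⁻¹).sum with hS
  have hder : Q.derivative.eval z = Q.eval z * S := by
    conv_lhs => rw [hfac]
    conv_rhs => rw [hfac]
    exact eval_derivative_multiset_prod _ _ _ hzr
  -- derive S = N / (z - t)
  rw [hder] at hcontra
  have htz : t - z ≠ 0 := by
    intro h
    rw [h, zero_mul, add_zero, mul_eq_zero] at hcontra
    rcases hcontra with h' | h'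
    · exact (Nat.cast_ne_zero.2 (by omega : N ≠ 0)) h'
    · exact hQz h'
  have hzt : z - t ≠ 0 := fun h => htz (by linear_combination -h)
  have h1 : ((N:ℂ) + (t - z) * S) * Q.eval z = 0 := by linear_combination hcontra
  have h2 : (N:ℂ) + (t - z) * S = 0 := by
    rcases mul_eq_zero.mp h1 with h | h
    · exact h
    · exact absurd h hQz
  have hSval : S = (N : ℂ) / (z - t) := by
    rw [eq_div_iff hzt]
    linear_combination -h2
  -- each term in the closed disk
  have hterm : ∀ r ∈ Q.roots, ‖(z - r)⁻¹ + Complex.I / (2*(y:ℂ))‖ ≤ 1/(2*y) := by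
    intro r hr
    have him : y ≤ (z - r).im := by
      have := hroots r hr
      simp only [Complex.sub_im, hy]
      linarith
    exact (inv_disk hz (sub_ne_zero.2 (hzr r hr))).mpr him
  -- sum bound
  have hsum : ‖S + (Q.roots.card : ℂ) * (Complex.I / (2*(y:ℂ)))‖ ≤ Q.roots.card * (1/(2*y)) := by
    have hrw : S + (Q.roots.card : ℂ) * (Complex.I / (2*(y:ℂ)))
        = (Q.roots.map fun r => (z - r)⁻¹ + Complex.I / (2*(y:ℂ))).sum := by
      rw [Multiset.sum_map_add]
      congr 1
      rw [Multiset.map_const', Multiset.sum_replicate, nsmul_eq_mul]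
    rw [hrw]
    refine le_trans (norm_multiset_sum_le _) ?_
    have := Multiset.sum_le_card_nsmul ((Q.roots.map fun r => (z - r)⁻¹ + Complex.I / (2*(y:ℂ))).map norm)
      (1/(2*y)) ?_
    · simpa [Multiset.map_map, nsmul_eq_mul] using this
    · intro x hx
      rw [Multiset.mem_map] at hx
      obtain ⟨u, hu, rfl⟩ := hx
      rw [Multiset.mem_map] at hu
      obtain ⟨r, hr, rfl⟩ := hu
      exact hterm r hr
  -- extend to N
  have hIm : ‖Complex.I / (2*(y:ℂ))‖ = 1/(2*y) := by
    rw [norm_div, Complex.norm_I, show (2*(y:ℂ)) = ((2*y:ℝ):ℂ) by push_cast; ring,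
      Complex.norm_real, Real.norm_eq_abs, abs_of_pos (by linarith)]
  have hm_le : Q.roots.card ≤ N := hcard ▸ hdeg
  have hsumN : ‖S + (N : ℂ) * (Complex.I / (2*(y:ℂ)))‖ ≤ N * (1/(2*y)) := by
    have hsplit2 : S + (N : ℂ) * (Complex.I / (2*(y:ℂ)))
        = (S + (Q.roots.card : ℂ) * (Complex.I / (2*(y:ℂ))))
          + ((N - Q.roots.card : ℕ) : ℂ) * (Complex.I / (2*(y:ℂ))) := by
      push_cast [Nat.cast_sub hm_le]
      ring
    rw [hsplit2]
    refine le_trans (norm_add_le _ _) ?_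
    rw [norm_mul, hIm, Complex.norm_natCast]
    push_cast [Nat.cast_sub hm_le]
    have h1 : (0:ℝ) < 1/(2*y) := by positivity
    nlinarith [hsum, (Nat.cast_le (α := ℝ)).2 hm_le]
  -- contradiction via inv_disk at w = z - t
  rw [hSval] at hsumN
  have hzt : z - t ≠ 0 := fun h => htz (by linear_combination -h)
  have hN0 : (0:ℝ) < N := by exact_mod_cast hN
  have hfinal : ‖(z - t)⁻¹ + Complex.I / (2*(y:ℂ))‖ ≤ 1/(2*y) := by
    have : (N : ℂ) / (z - t) + (N : ℂ) * (Complex.I / (2*(y:ℂ)))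
        = (N : ℂ) * ((z - t)⁻¹ + Complex.I / (2*(y:ℂ))) := by
      field_simp
    rw [this, norm_mul, Complex.norm_natCast] at hsumN
    exact le_of_mul_le_mul_left hsumN hN0
  have := (inv_disk hz hzt).mp hfinal
  simp only [Complex.sub_im, hy] at this
  linarith


lemma fieldid (a b c K Nn q0 q1 t : ℂ) (ha : a ≠ 0) (hb : b ≠ 0) (hc : c ≠ 0)
    (hN : Nn + 1 ≠ 0)
    (h1 : a*(Nn+1) = b*(Nn+1-K)) (h2 : (Nn+1)*a = c*(K+1)) :
    q0/b + t*q1/c = (q0 + (Nn+1)⁻¹*(t*(K+1)*q1 - K*q0))/a := by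
  rw [div_add_div _ _ hb hc, div_eq_div_iff (mul_ne_zero hb hc) ha]
  have hinv : (Nn+1)⁻¹ * (Nn+1) = 1 := inv_mul_cancel₀ hN
  linear_combination (q0*c*(Nn+1)⁻¹)*h1 + (t*q1*b*(Nn+1)⁻¹)*h2
    + (q0*b*c - q0*c*a - t*q1*b*a)*hinv

lemma esymm_zero' (s : Multiset ℂ) : s.esymm 0 = 1 := by
  simp [Multiset.esymm]

lemma esymm_cons (t : ℂ) (s : Multiset ℂ) (k : ℕ) :
    (t ::ₘ s).esymm (k+1) = s.esymm (k+1) + t * s.esymm k := by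
  simp only [Multiset.esymm, Multiset.powersetCard_cons, Multiset.map_add, Multiset.sum_add,
    Multiset.map_map]
  congr 1
  rw [← Multiset.sum_map_mul_left]
  congr 1
  apply Multiset.map_congr rfl
  intro A hA
  simp [Multiset.prod_cons]

lemma esymm_eq_zero_of_card_lt {s : Multiset ℂ} {k : ℕ} (h : Multiset.card s < k) :
    s.esymm k = 0 := by
  have : Multiset.powersetCard k s = 0 := by
    rw [← Multiset.card_eq_zero, Multiset.card_powersetCard]
    exact Nat.choose_eq_zero_of_lt h
  simp [Multiset.esymm, this]

noncomputable def Qt (N : ℕ) (t : ℂ) (Q : Polynomial ℂ) : Polynomial ℂ :=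
  Q + C ((N:ℂ)⁻¹) * ((C t - X) * derivative Q)

lemma Qt_coeff (N : ℕ) (t : ℂ) (Q : Polynomial ℂ) (k : ℕ) :
    (Qt N t Q).coeff k
      = Q.coeff k + (N:ℂ)⁻¹ * (t * ((k:ℂ)+1) * Q.coeff (k+1) - (k:ℂ) * Q.coeff k) := by
  cases k with
  | zero =>
    simp [Qt, coeff_derivative]
  | succ m =>
    simp only [Qt, coeff_add, coeff_C_mul, sub_mul, coeff_sub, coeff_X_mul, coeff_derivative,
      coeff_C_mul]
    push_cast
    ring

noncomputable def polV (n : ℕ) (Q : Polynomial ℂ) (s : Multiset ℂ) : ℂ :=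
  ∑ k ∈ Finset.range (n+1), Q.coeff k / ((n.choose k : ℕ) : ℂ) * s.esymm k

lemma choose_identity (n k : ℕ) (hk : k ≤ n) (q0 q1 t : ℂ) :
    q0/(((n+1).choose k : ℕ) : ℂ) + t*q1/(((n+1).choose (k+1) : ℕ) : ℂ)
      = (q0 + (((n:ℂ))+1)⁻¹ * (t*((k:ℂ)+1)*q1 - (k:ℂ)*q0))/((n.choose k : ℕ) : ℂ) := by
  have ha : ((n.choose k : ℕ) : ℂ) ≠ 0 :=
    Nat.cast_ne_zero.2 (Nat.choose_pos hk).ne'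
  have hb : (((n+1).choose k : ℕ) : ℂ) ≠ 0 :=
    Nat.cast_ne_zero.2 (Nat.choose_pos (hk.trans (Nat.le_succ n))).ne'
  have hc : (((n+1).choose (k+1) : ℕ) : ℂ) ≠ 0 :=
    Nat.cast_ne_zero.2 (Nat.choose_pos (Nat.succ_le_succ hk)).ne'
  have hn1 : ((n:ℂ)+1) ≠ 0 := Nat.cast_add_one_ne_zero n
  refine fieldid _ _ _ _ _ _ _ _ ha hb hc ?_ ?_ ?_
  · exact hn1
  · have h1 := Nat.choose_mul_succ_eq n k
    have := congrArg (fun m : ℕ => (m : ℂ)) h1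
    push_cast [Nat.cast_sub (hk.trans (Nat.le_succ n))] at this
    push_cast
    linear_combination this
  · have h2 := Nat.add_one_mul_choose_eq n k
    have := congrArg (fun m : ℕ => (m : ℂ)) h2
    push_cast at this
    push_cast
    linear_combination this

lemma polV_cons (n : ℕ) (Q : Polynomial ℂ) (t : ℂ) (s : Multiset ℂ)
    (hcard : Multiset.card s = n) :
    polV (n+1) Q (t ::ₘ s) = polV n (Qt (n+1) t Q) s := by
  have hE1 : s.esymm (n+1) = 0 := esymm_eq_zero_of_card_lt (by omega)
  have h1 : polV (n+1) Q (t ::ₘ s)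
      = (∑ k ∈ Finset.range (n+1),
          Q.coeff (k+1) / (((n+1).choose (k+1) : ℕ) : ℂ) * s.esymm (k+1))
        + Q.coeff 0
        + (∑ k ∈ Finset.range (n+1),
          (t * (Q.coeff (k+1) / (((n+1).choose (k+1) : ℕ) : ℂ))) * s.esymm k) := by
    rw [polV, Finset.sum_range_succ']
    have : ∀ k ∈ Finset.range (n+1),
        Q.coeff (k+1) / (((n+1).choose (k+1) : ℕ) : ℂ) * (t ::ₘ s).esymm (k+1)
        = Q.coeff (k+1) / (((n+1).choose (k+1) : ℕ) : ℂ) * s.esymm (k+1)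
          + (t * (Q.coeff (k+1) / (((n+1).choose (k+1) : ℕ) : ℂ))) * s.esymm k := by
      intro k _
      rw [esymm_cons]
      ring
    rw [Finset.sum_congr rfl this, Finset.sum_add_distrib]
    have e0 : (t ::ₘ s).esymm 0 = 1 := esymm_zero' _
    rw [e0]
    simp
    ring
  have h2 : (∑ k ∈ Finset.range (n+1),
          Q.coeff (k+1) / (((n+1).choose (k+1) : ℕ) : ℂ) * s.esymm (k+1))
        + Q.coeff 0
      = ∑ k ∈ Finset.range (n+1),
          Q.coeff k / (((n+1).choose k : ℕ) : ℂ) * s.esymm k := by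
    have e1 := Finset.sum_range_succ
      (fun k => Q.coeff k / (((n+1).choose k : ℕ) : ℂ) * s.esymm k) (n+1)
    have e2 := Finset.sum_range_succ'
      (fun k => Q.coeff k / (((n+1).choose k : ℕ) : ℂ) * s.esymm k) (n+1)
    rw [hE1, mul_zero, add_zero] at e1
    rw [e1] at e2
    rw [e2]
    simp [esymm_zero']
  rw [h1, h2, ← Finset.sum_add_distrib, polV]
  apply Finset.sum_congr rfl
  intro k hk
  have hkn : k ≤ n := by
    have := Finset.mem_range.mp hk; omega
  rw [Qt_coeff]
  have hci := choose_identity n k hkn (Q.coeff k) (Q.coeff (k+1)) t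
  push_cast
  push_cast at hci
  linear_combination s.esymm k * hci

lemma gws : ∀ (n : ℕ) (Q : Polynomial ℂ) (s : Multiset ℂ), Multiset.card s = n →
    (∀ r ∈ s, 0 < r.im) → Q ≠ 0 → Q.natDegree ≤ n →
    (∀ u : ℂ, 0 < u.im → Q.eval u ≠ 0) → polV n Q s ≠ 0 := by
  intro n
  induction n with
  | zero =>
    intro Q s hs hmem hQ0 hdeg hst
    have : polV 0 Q s = Q.coeff 0 := by
      simp [polV, esymm_zero']
    rw [this]
    intro h
    apply hQ0
    have hQC : Q = C (Q.coeff 0) := Polynomial.eq_C_of_natDegree_le_zero hdeg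
    rw [hQC, h, map_zero]
  | succ n ih =>
    intro Q s hs hmem hQ0 hdeg hst
    obtain ⟨t, s', rfl⟩ : ∃ t s', s = t ::ₘ s' := by
      have hne : s ≠ 0 := by
        intro h
        rw [h] at hs
        simp at hs
      obtain ⟨t, ht⟩ := Multiset.exists_mem_of_ne_zero hne
      exact ⟨t, _, (Multiset.cons_erase ht).symm⟩
    have hcard' : Multiset.card s' = n := by
      rw [Multiset.card_cons] at hs; omega
    have ht : 0 < t.im := hmem t (Multiset.mem_cons_self _ _)
    have hNne : ((n+1 : ℕ) : ℂ) ≠ 0 := Nat.cast_ne_zero.2 (Nat.succ_ne_zero n)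
    have hst' : ∀ u : ℂ, 0 < u.im → (Qt (n+1) t Q).eval u ≠ 0 := by
      intro u hu
      have hla := laguerre (N := n+1) (by omega) Q hQ0 hdeg hst ht hu
      have heval : (Qt (n+1) t Q).eval u
          = ((n+1 : ℕ):ℂ)⁻¹ * (((n+1 : ℕ):ℂ) * Q.eval u + (t - u) * Q.derivative.eval u) := by
        simp only [Qt, eval_add, eval_mul, eval_sub, eval_C, eval_X]
        rw [mul_add]
        congr 1
        rw [← mul_assoc, inv_mul_cancel₀ hNne, one_mul]
      rw [heval]
      exact mul_ne_zero (inv_ne_zero hNne) hla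
    have hQt0 : Qt (n+1) t Q ≠ 0 := by
      intro h
      exact hst' Complex.I (by simp) (by rw [h]; simp)
    have hdeg' : (Qt (n+1) t Q).natDegree ≤ n := by
      rw [Polynomial.natDegree_le_iff_coeff_eq_zero]
      intro k hk
      rw [Qt_coeff]
      have h1 : Q.coeff (k+1) = 0 :=
        Polynomial.coeff_eq_zero_of_natDegree_lt (by omega)
      rcases Nat.lt_or_ge (n+1) k with h | h
      · rw [Polynomial.coeff_eq_zero_of_natDegree_lt (by omega), h1]
        simp
      · have hk1 : k = n+1 := by omega
        subst hk1
        rw [h1, mul_zero, zero_sub]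
        have hne : ((n:ℂ)+1) ≠ 0 := Nat.cast_add_one_ne_zero n
        push_cast
        field_simp
        ring
    rw [polV_cons n Q t s' hcard']
    exact ih (Qt (n+1) t Q) s' hcard'
      (fun r hr => hmem r (Multiset.mem_cons_of_mem hr)) hQt0 hdeg' hst'

end AnalyticAux

open MvPolynomial
open scoped Classical

/-- A polynomial is stable if it is nonvanishing whenever all arguments lie in the
open upper half-plane `H = {z : ℂ | 0 < z.im}`. -/
def IsStable {σ : Type*} (f : MvPolynomial σ ℂ) : Prop :=
  ∀ x : σ → ℂ, (∀ i, 0 < (x i).im) → eval x f ≠ 0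

/-- A polynomial is multiaffine if it has degree at most 1 in each variable. -/
def IsMultiaffine {σ : Type*} (f : MvPolynomial σ ℂ) : Prop :=
  ∀ i, degreeOf i f ≤ 1

/-- The `G`-symmetrizer `T_G = (1/|G|) ∑_{σ ∈ G} σ` applied to `f`. -/
noncomputable def symmG {n : ℕ} (G : Subgroup (Equiv.Perm (Fin n)))
    (f : MvPolynomial (Fin n) ℂ) : MvPolynomial (Fin n) ℂ :=
  (Nat.card G : ℂ)⁻¹ • ∑ σ : G, rename (⇑(σ : Equiv.Perm (Fin n))) f

/-- `G` is orbit homogeneous: whenever two subsets `A, B` of `{1,…,n}` satisfy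
`|A ∩ S| = |B ∩ S|` for every orbit `S` of `G`, some `σ ∈ G` maps `A` onto `B`. -/
def OrbitHomogeneous {n : ℕ} (G : Subgroup (Equiv.Perm (Fin n))) : Prop :=
  ∀ A B : Finset (Fin n),
    (∀ i : Fin n, ((A : Set (Fin n)) ∩ MulAction.orbit G i).ncard
      = ((B : Set (Fin n)) ∩ MulAction.orbit G i).ncard) →
    ∃ σ ∈ G, A.image ⇑σ = B

noncomputable section SymmAux

open MvPolynomial

variable {n : ℕ}

/-- indicator finsupp of a finset -/
noncomputable def ind (S : Finset (Fin n)) : Fin n →₀ ℕ := ∑ i ∈ S, Finsupp.single i 1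

lemma ind_apply (S : Finset (Fin n)) (i : Fin n) :
    ind S i = if i ∈ S then 1 else 0 := by
  classical
  rw [ind, Finsupp.finset_sum_apply]
  simp [Finsupp.single_apply]

lemma support_ind (S : Finset (Fin n)) : (ind S).support = S := by
  ext i
  rw [Finsupp.mem_support_iff, ind_apply]
  by_cases h : i ∈ S <;> simp [h]

lemma sq_eq_ind {m : Fin n →₀ ℕ} (h : ∀ i, m i ≤ 1) : m = ind m.support := by
  ext i
  rw [ind_apply]
  by_cases hi : i ∈ m.support
  · have h1 : m i ≠ 0 := Finsupp.mem_support_iff.1 hi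
    have := h i
    simp only [hi, if_true]
    omega
  · have h0 : m i = 0 := by
      by_contra hc
      exact hi (Finsupp.mem_support_iff.2 hc)
    simp [hi, h0]

lemma mapDomain_ind (σ : Equiv.Perm (Fin n)) (S : Finset (Fin n)) :
    Finsupp.mapDomain ⇑σ (ind S) = ind (S.image ⇑σ) := by
  rw [ind, Finsupp.mapDomain_finset_sum]
  simp only [Finsupp.mapDomain_single]
  rw [ind, Finset.sum_image (fun a _ b _ h => σ.injective h)]

lemma aeval_sq (g : MvPolynomial (Fin n) ℂ) (hsq : ∀ m ∈ g.support, ∀ i, m i ≤ 1)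
    {A : Type*} [CommSemiring A] [Algebra ℂ A] (φ : Fin n → A) :
    aeval φ g = ∑ S ∈ (Finset.univ : Finset (Fin n)).powerset,
      algebraMap ℂ A (coeff (ind S) g) * ∏ i ∈ S, φ i := by
  classical
  have himg : g.support.image (fun m => m.support) ⊆ (Finset.univ : Finset (Fin n)).powerset :=
    fun S _ => Finset.mem_powerset.2 (Finset.subset_univ _)
  calc aeval φ g = ∑ m ∈ g.support, aeval φ (monomial m (coeff m g)) := by
        conv_lhs => rw [as_sum g]
        rw [map_sum]
    _ = ∑ S ∈ g.support.image (fun m => m.support),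
          algebraMap ℂ A (coeff (ind S) g) * ∏ i ∈ S, φ i := by
        rw [Finset.sum_image (fun m1 hm1 m2 hm2 h => by
          rw [sq_eq_ind (hsq m1 hm1), sq_eq_ind (hsq m2 hm2), h])]
        apply Finset.sum_congr rfl
        intro m hm
        rw [aeval_monomial]
        congr 1
        · rw [← sq_eq_ind (hsq m hm)]
        · rw [Finsupp.prod]
          apply Finset.prod_congr rfl
          intro i hi
          have h1 : m i = 1 := by
            have h2 : m i ≠ 0 := Finsupp.mem_support_iff.1 hi
            have := hsq m hm i
            omega
          rw [h1, pow_one]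
    _ = ∑ S ∈ (Finset.univ : Finset (Fin n)).powerset,
          algebraMap ℂ A (coeff (ind S) g) * ∏ i ∈ S, φ i := by
        apply Finset.sum_subset himg
        intro S _ hS
        have hzero : coeff (ind S) g = 0 := by
          by_contra hc
          apply hS
          refine Finset.mem_image.2 ⟨ind S, mem_support_iff.2 hc, ?_⟩
          rw [support_ind]
        rw [hzero, map_zero, zero_mul]

lemma exists_perm_image {S T : Finset (Fin n)} (h : S.card = T.card) :
    ∃ σ : Equiv.Perm (Fin n), S.image ⇑σ = T := by
  classical
  have h1 : Fintype.card {x // x ∈ S} = Fintype.card {x // x ∈ T} := by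
    rw [Fintype.card_coe, Fintype.card_coe, h]
  have h2 : Fintype.card {x : Fin n // ¬ x ∈ S} = Fintype.card {x : Fin n // ¬ x ∈ T} := by
    rw [Fintype.card_subtype_compl, Fintype.card_subtype_compl, h1]
  set e := Fintype.equivOfCardEq h1 with he
  set e' := Fintype.equivOfCardEq h2 with he'
  refine ⟨Equiv.subtypeCongr e e', ?_⟩
  have hmem : ∀ i (hi : i ∈ S), (Equiv.subtypeCongr e e') i ∈ T := by
    intro i hi
    have : (Equiv.subtypeCongr e e') i = ↑(e ⟨i, hi⟩) := by
      simp [Equiv.subtypeCongr, hi]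
    rw [this]
    exact (e ⟨i, hi⟩).2
  apply Finset.eq_of_subset_of_card_le
  · intro j hj
    obtain ⟨i, hi, rfl⟩ := Finset.mem_image.1 hj
    exact hmem i hi
  · exact le_of_eq (by rw [Finset.card_image_of_injective _ (Equiv.injective _), h])

end SymmAux

/-- The full symmetrizer `T_{S_n} = (1/n!) ∑_{σ ∈ S_n} σ` maps every stable
multiaffine polynomial to a stable polynomial. -/
theorem full_symmetrizer_preserves_stability (n : ℕ) (hn : 1 ≤ n) :
    ∀ f : MvPolynomial (Fin n) ℂ, IsMultiaffine f → IsStable f →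
      IsStable ((n.factorial : ℂ)⁻¹ • ∑ σ : Equiv.Perm (Fin n), rename ⇑σ f) := by
  intro f hma hstab x hx
  set g : MvPolynomial (Fin n) ℂ :=
    (n.factorial : ℂ)⁻¹ • ∑ σ : Equiv.Perm (Fin n), rename ⇑σ f with hg
  have hfact : ((n.factorial : ℕ) : ℂ) ≠ 0 := Nat.cast_ne_zero.2 (Nat.factorial_ne_zero n)
  -- symmetry of g
  have hsym : ∀ τ : Equiv.Perm (Fin n), rename ⇑τ g = g := by
    intro τ
    rw [hg, map_smul, map_sum]
    congr 1
    calc ∑ σ : Equiv.Perm (Fin n), rename ⇑τ (rename ⇑σ f)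
        = ∑ σ : Equiv.Perm (Fin n), rename ⇑(τ * σ) f := by
          apply Finset.sum_congr rfl
          intro σ _
          rw [rename_rename]
          rfl
      _ = ∑ σ : Equiv.Perm (Fin n), rename ⇑σ f :=
          Equiv.sum_comp (Equiv.mulLeft τ) (fun σ => rename ⇑σ f)
  -- squarefree support of g
  have hsq : ∀ m ∈ g.support, ∀ i, m i ≤ 1 := by
    intro m hm i
    rw [mem_support_iff, hg, coeff_smul, smul_eq_mul] at hm
    have hm2 : coeff m (∑ σ : Equiv.Perm (Fin n), rename ⇑σ f) ≠ 0 := by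
      intro h
      rw [h, mul_zero] at hm
      exact hm rfl
    rw [coeff_sum] at hm2
    obtain ⟨σ, _, hσ⟩ := Finset.exists_ne_zero_of_sum_ne_zero hm2
    have hco : coeff (Finsupp.mapDomain ⇑σ.symm m) f ≠ 0 := by
      intro h
      apply hσ
      have := coeff_rename_mapDomain ⇑σ σ.injective f (Finsupp.mapDomain ⇑σ.symm m)
      rw [h] at this
      have harg : Finsupp.mapDomain ⇑σ (Finsupp.mapDomain ⇑σ.symm m) = m := by
        rw [← Finsupp.mapDomain_comp, Equiv.self_comp_symm, Finsupp.mapDomain_id]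
      rwa [harg] at this
    have hmem : Finsupp.mapDomain ⇑σ.symm m ∈ f.support := mem_support_iff.2 hco
    have hb := (monomial_le_degreeOf (σ.symm i) hmem).trans (hma (σ.symm i))
    rwa [Finsupp.mapDomain_equiv_apply, Equiv.symm_symm, Equiv.apply_symm_apply] at hb
  -- coefficients depend only on cardinality
  have hc_eq : ∀ S T : Finset (Fin n), S.card = T.card →
      coeff (ind S) g = coeff (ind T) g := by
    intro S T h
    obtain ⟨σ, hσ⟩ := exists_perm_image h
    calc coeff (ind S) g = coeff (Finsupp.mapDomain ⇑σ (ind S)) (rename ⇑σ g) :=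
          (coeff_rename_mapDomain ⇑σ σ.injective g (ind S)).symm
      _ = coeff (ind T) g := by rw [mapDomain_ind, hσ, hsym σ]
  -- the diagonal polynomial
  set P : Polynomial ℂ := aeval (fun _ : Fin n => Polynomial.X) g with hP
  set c : Finset (Fin n) → ℂ := fun S => coeff (ind S) g with hc
  have hPsum : P = ∑ S ∈ (Finset.univ : Finset (Fin n)).powerset,
      Polynomial.C (c S) * Polynomial.X ^ S.card := by
    rw [hP, aeval_sq g hsq]
    apply Finset.sum_congr rfl
    intro S _
    rw [Polynomial.algebraMap_eq, Finset.prod_const]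
  have hPcoeff : ∀ k, P.coeff k = ∑ S ∈ Finset.powersetCard k (Finset.univ : Finset (Fin n)), c S := by
    intro k
    rw [hPsum, Polynomial.finset_sum_coeff]
    rw [Finset.powersetCard_eq_filter, Finset.sum_filter]
    apply Finset.sum_congr rfl
    intro S _
    rw [Polynomial.coeff_C_mul, Polynomial.coeff_X_pow]
    by_cases h : S.card = k
    · simp [h]
    · have h' : ¬ (k = S.card) := fun hh => h hh.symm
      simp [h, h']
  have hcardu : (Finset.univ : Finset (Fin n)).card = n := by
    rw [Finset.card_univ, Fintype.card_fin]
  have hdegP : P.natDegree ≤ n := by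
    rw [Polynomial.natDegree_le_iff_coeff_eq_zero]
    intro k hk
    rw [hPcoeff k]
    have hempty : Finset.powersetCard k (Finset.univ : Finset (Fin n)) = ∅ := by
      apply Finset.eq_empty_of_forall_notMem
      intro S hS
      obtain ⟨_, hcard⟩ := Finset.mem_powersetCard.1 hS
      have := Finset.card_le_card (Finset.subset_univ S)
      omega
    rw [hempty, Finset.sum_empty]
  -- diagonal of g equals diagonal of f
  have hdiag : ∀ w : ℂ, eval (fun _ : Fin n => w) g = eval (fun _ : Fin n => w) f := by
    intro w
    rw [hg, smul_eval, map_sum]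
    have : ∀ σ : Equiv.Perm (Fin n),
        eval (fun _ : Fin n => w) (rename ⇑σ f) = eval (fun _ : Fin n => w) f := by
      intro σ
      rw [eval_rename]
      rfl
    rw [Finset.sum_congr rfl (fun σ _ => this σ), Finset.sum_const, Finset.card_univ,
      Fintype.card_perm, Fintype.card_fin, nsmul_eq_mul, ← mul_assoc,
      inv_mul_cancel₀ hfact, one_mul]
  -- P evaluates like the diagonal
  have hPeval : ∀ w : ℂ, P.eval w = eval (fun _ : Fin n => w) g := by
    intro w
    have h1 : eval (fun _ : Fin n => w) g
        = ∑ S ∈ (Finset.univ : Finset (Fin n)).powerset, c S * ∏ i ∈ S, w := by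
      have := aeval_sq g hsq (A := ℂ) (fun _ : Fin n => w)
      rw [show (aeval (fun _ : Fin n => w) g : ℂ) = eval (fun _ : Fin n => w) g from rfl] at this
      rw [this]
      apply Finset.sum_congr rfl
      intro S _
      rw [show (algebraMap ℂ ℂ) (c S) = c S from rfl]
    rw [h1, hPsum, Polynomial.eval_finset_sum]
    apply Finset.sum_congr rfl
    intro S _
    rw [Polynomial.eval_mul, Polynomial.eval_C, Polynomial.eval_pow, Polynomial.eval_X,
      Finset.prod_const]
  have hstabP : ∀ u : ℂ, 0 < u.im → P.eval u ≠ 0 := by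
    intro u hu
    rw [hPeval u, hdiag u]
    exact hstab (fun _ => u) (fun _ => hu)
  have hP0 : P ≠ 0 := by
    intro h
    apply hstabP Complex.I (by simp)
    rw [h, Polynomial.eval_zero]
  -- final computation
  have hEE : eval x g = polV n P (Multiset.map x (Finset.univ : Finset (Fin n)).val) := by
    have h1 : eval x g
        = ∑ S ∈ (Finset.univ : Finset (Fin n)).powerset, c S * ∏ i ∈ S, x i := by
      have := aeval_sq g hsq (A := ℂ) x
      rw [show (aeval x g : ℂ) = eval x g from rfl] at this
      rw [this]
      simp only [Algebra.algebraMap_self_apply, hc]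
    rw [h1]
    rw [show ∑ S ∈ (Finset.univ : Finset (Fin n)).powerset, c S * ∏ i ∈ S, x i
        = ∑ k ∈ Finset.range ((Finset.univ : Finset (Fin n)).card + 1),
            ∑ S ∈ Finset.powersetCard k (Finset.univ : Finset (Fin n)), c S * ∏ i ∈ S, x i from by
      rw [Finset.powerset_card_disjiUnion]; exact Finset.sum_disjiUnion _ _ _, hcardu]
    rw [polV]
    apply Finset.sum_congr rfl
    intro k hk
    have hkn : k ≤ n := by
      have := Finset.mem_range.1 hk
      omega
    have hchoose : (((n.choose k : ℕ)) : ℂ) ≠ 0 :=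
      Nat.cast_ne_zero.2 (Nat.choose_pos hkn).ne'
    have hcS : ∀ S ∈ Finset.powersetCard k (Finset.univ : Finset (Fin n)),
        c S = P.coeff k / ((n.choose k : ℕ) : ℂ) := by
      intro S hS
      obtain ⟨_, hcard⟩ := Finset.mem_powersetCard.1 hS
      have hsum : P.coeff k = ((n.choose k : ℕ) : ℂ) * c S := by
        rw [hPcoeff k]
        rw [Finset.sum_congr rfl (fun T hT => hc_eq T S
          (((Finset.mem_powersetCard.1 hT).2).trans hcard.symm))]
        rw [Finset.sum_const, nsmul_eq_mul, Finset.card_powersetCard, hcardu]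
      rw [hsum, mul_comm, mul_div_assoc, div_self hchoose, mul_one]
    rw [Finset.sum_congr rfl (fun S hS => by rw [hcS S hS]), ← Finset.mul_sum,
      Finset.esymm_map_val]
  rw [hEE]
  apply gws n P (Multiset.map x (Finset.univ : Finset (Fin n)).val)
  · rw [Multiset.card_map]
    exact hcardu
  · intro r hr
    obtain ⟨i, _, rfl⟩ := Multiset.mem_map.1 hr
    exact hx i
  · exact hP0
  · exact hdegP
  · exact hstabP
end

section
/- Let f ∈ ℂ[z_1,…,z_n] be stable and let ζ ∈ ℂ with Im ζ ≥ 0. Then the polynomial g ∈ ℂ[z_1,…,z_{n−1}] obtained from f by substituting z_n = ζ is either stable or identically zero. -/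
open MvPolynomial
open scoped Classical

lemma polyEval_mvAeval {σ : Type*} (φ : σ → Polynomial ℂ) (p : MvPolynomial σ ℂ) (w : ℂ) :
    Polynomial.eval w (MvPolynomial.aeval φ p)
      = MvPolynomial.eval (fun i => Polynomial.eval w (φ i)) p := by
  induction p using MvPolynomial.induction_on with
  | C a => simp
  | add p q hp hq => simp only [Polynomial.eval_add, map_add, hp, hq]
  | mul_X p i hp => simp only [Polynomial.eval_mul, map_mul, aeval_X, eval_X, hp]

lemma mvEval_mvAeval {σ τ : Type*} (φ : σ → MvPolynomial τ ℂ) (p : MvPolynomial σ ℂ)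
    (x : τ → ℂ) :
    eval x (aeval φ p) = eval (fun i => eval x (φ i)) p := by
  induction p using MvPolynomial.induction_on with
  | C a => simp
  | add p q hp hq => simp only [map_add, hp, hq]
  | mul_X p i hp => simp only [map_mul, aeval_X, eval_X, hp]

set_option maxHeartbeats 1000000 in
/-- Fixing the last variable of a stable polynomial to a value in the closed upper
half-plane yields a polynomial that is stable or identically zero. -/
theorem stable_fix_last_variable (n : ℕ) (f : MvPolynomial (Fin (n + 1)) ℂ)
    (hf : IsStable f) (ζ : ℂ) (hζ : 0 ≤ ζ.im) :
    aeval (Fin.snoc X (C ζ) : Fin (n + 1) → MvPolynomial (Fin n) ℂ) f = 0 ∨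
      IsStable (aeval (Fin.snoc X (C ζ) : Fin (n + 1) → MvPolynomial (Fin n) ℂ) f) := by
  have key : ∀ (v : Fin n → ℂ) (c : ℂ),
      eval v (aeval (Fin.snoc X (C c) : Fin (n + 1) → MvPolynomial (Fin n) ℂ) f)
        = eval (Fin.snoc v c) f := by
    intro v c
    rw [mvEval_mvAeval]
    have harg : (fun i => eval v ((Fin.snoc X (C c) : Fin (n + 1) → MvPolynomial (Fin n) ℂ) i)) = Fin.snoc v c := by
      funext i
      induction i using Fin.lastCases with
      | last => simp
      | cast j => simp
    rw [harg]
  by_cases hg : aeval (Fin.snoc X (C ζ) : Fin (n + 1) → MvPolynomial (Fin n) ℂ) f = 0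
  · exact Or.inl hg
  right
  rcases eq_or_lt_of_le hζ with hζ0 | hζpos
  · -- ζ.im = 0
    intro x hx
    by_contra hgx
    have hy : ∃ y : Fin n → ℂ,
        eval y (aeval (Fin.snoc X (C ζ) : Fin (n + 1) → MvPolynomial (Fin n) ℂ) f) ≠ 0 := by
      by_contra h
      push_neg at h
      exact hg (MvPolynomial.funext fun v => by rw [h v, map_zero])
    obtain ⟨y, hy⟩ := hy
    set u : Fin n → ℂ := fun j => y j - x j with hu
    set U : Set ℂ := {w | ∀ j, 0 < (x j + u j * w).im} with hUdef
    have hUopen : IsOpen U := by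
      have hUeq : U = ⋂ j, ((fun w => (x j + u j * w).im) ⁻¹' Set.Ioi 0) := by
        ext w; simp [hUdef, Set.mem_iInter]
      rw [hUeq]
      exact isOpen_iInter_of_finite fun j =>
        (isOpen_Ioi).preimage (Complex.continuous_im.comp (by continuity))
    have h0U : (0 : ℂ) ∈ U := fun j => by simpa using hx j
    obtain ⟨r, hr0, hrU⟩ := (Metric.nhds_basis_closedBall.mem_iff).1 (hUopen.mem_nhds h0U)
    set q : Polynomial ℂ :=
      MvPolynomial.aeval (fun j => Polynomial.C (x j) + Polynomial.C (u j) * Polynomial.X)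
        (aeval (Fin.snoc X (C ζ) : Fin (n + 1) → MvPolynomial (Fin n) ℂ) f) with hqdef
    have hqeval : ∀ w : ℂ, q.eval w = eval (Fin.snoc (fun j => x j + u j * w) ζ) f := by
      intro w
      rw [hqdef, polyEval_mvAeval]
      simp only [Polynomial.eval_add, Polynomial.eval_mul, Polynomial.eval_C, Polynomial.eval_X]
      rw [key]
    have hq1 : q.eval 1 ≠ 0 := by
      have hxy : (fun j => x j + u j * 1) = y := funext fun j => by simp [hu]
      rw [hqeval, hxy, ← key]
      exact hy
    have hq0 : q ≠ 0 := fun h => hq1 (by rw [h, Polynomial.eval_zero])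
    have hinf : ((Set.Ioo (0 : ℝ) r) \
        ↑(q.roots.toFinset.image (fun z : ℂ => ‖z‖))).Nonempty :=
      ((Set.Ioo_infinite hr0).diff (q.roots.toFinset.image _).finite_toSet).nonempty
    obtain ⟨r', ⟨⟨hr'0, hr'r⟩, hr'roots⟩⟩ := hinf
    have hqcirc : ∀ w : ℂ, ‖w‖ = r' → q.eval w ≠ 0 := by
      intro w hw hw0
      apply hr'roots
      rw [← hw]
      exact Finset.mem_coe.mpr (Finset.mem_image.mpr
        ⟨w, Multiset.mem_toFinset.mpr ((Polynomial.mem_roots hq0).mpr hw0), rfl⟩)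
    set F : ℝ × ℂ → ℂ :=
      fun p => eval (Fin.snoc (fun j => x j + u j * p.2) (ζ + p.1 * Complex.I)) f with hFdef
    have hF0 : ∀ w : ℂ, F (0, w) = q.eval w := by
      intro w
      rw [hqeval]
      simp [hFdef]
    have hFcont : Continuous F := by
      have hc : Continuous fun p : ℝ × ℂ =>
          (Fin.snoc (fun j => x j + u j * p.2) (ζ + p.1 * Complex.I) : Fin (n + 1) → ℂ) := by
        apply continuous_pi
        intro i
        induction i using Fin.lastCases with
        | last =>
          simp only [Fin.snoc_last]
          exact continuous_const.add ((Complex.continuous_ofReal.comp continuous_fst).mul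
            continuous_const)
        | cast j =>
          simp only [Fin.snoc_castSucc]
          exact continuous_const.add (continuous_const.mul continuous_snd)
      exact (MvPolynomial.continuous_eval f).comp hc
    have claimA : ∀ ε : ℝ, 0 < ε → ∃ w : ℂ, ‖w‖ = r' ∧ ‖F (ε, w)‖ ≤ ‖F (ε, 0)‖ := by
      intro ε hε
      set Q : Polynomial ℂ :=
        MvPolynomial.aeval (fun j => Polynomial.C (x j) + Polynomial.C (u j) * Polynomial.X)
          (aeval (Fin.snoc X (C (ζ + ε * Complex.I)) : Fin (n + 1) → MvPolynomial (Fin n) ℂ) f)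
          with hQdef
      have hQeval : ∀ w : ℂ, Q.eval w = F (ε, w) := by
        intro w
        rw [hQdef, polyEval_mvAeval]
        simp only [Polynomial.eval_add, Polynomial.eval_mul, Polynomial.eval_C, Polynomial.eval_X]
        rw [key]
      have hQne : ∀ w ∈ Metric.closedBall (0 : ℂ) r', Q.eval w ≠ 0 := by
        intro w hw
        rw [hQeval, hFdef]
        apply hf
        intro i
        induction i using Fin.lastCases with
        | last =>
          simp only [Fin.snoc_last]
          simp [Complex.add_im, ← hζ0, hε]
        | cast j =>
          simp only [Fin.snoc_castSucc]
          have hwU : w ∈ U := hrU (Metric.closedBall_subset_closedBall hr'r.le hw)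
          exact hwU j
      obtain ⟨w₀, hw₀S, hmin⟩ := (isCompact_sphere (0 : ℂ) r').exists_isMinOn
        (NormedSpace.sphere_nonempty.mpr hr'0.le) (Q.continuous.norm.continuousOn)
      have hw₀cb : w₀ ∈ Metric.closedBall (0 : ℂ) r' := Metric.sphere_subset_closedBall hw₀S
      have hw₀pos : 0 < ‖Q.eval w₀‖ := norm_pos_iff.mpr (hQne w₀ hw₀cb)
      have h0cb : (0 : ℂ) ∈ Metric.closedBall (0 : ℂ) r' := Metric.mem_closedBall_self hr'0.le
      have h0pos : 0 < ‖Q.eval 0‖ := norm_pos_iff.mpr (hQne 0 h0cb)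
      have hmax : ‖(Q.eval 0)⁻¹‖ ≤ ‖Q.eval w₀‖⁻¹ := by
        apply Complex.norm_le_of_forall_mem_frontier_norm_le (Metric.isBounded_ball)
          (f := fun w => (Q.eval w)⁻¹) (U := Metric.ball (0 : ℂ) r')
        · constructor
          · exact (Q.differentiable.differentiableOn).inv
              (fun w hw => hQne w (Metric.ball_subset_closedBall hw))
          · rw [closure_ball (0 : ℂ) hr'0.ne']
            exact (Q.continuous.continuousOn).inv₀ fun w hw => hQne w hw
        · intro z hz
          rw [frontier_ball (0 : ℂ) hr'0.ne'] at hz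
          rw [norm_inv]
          exact inv_anti₀ hw₀pos (hmin hz)
        · rw [closure_ball (0 : ℂ) hr'0.ne']
          exact h0cb
      rw [norm_inv] at hmax
      have hle : ‖Q.eval w₀‖ ≤ ‖Q.eval 0‖ := (inv_le_inv₀ h0pos hw₀pos).mp hmax
      refine ⟨w₀, by rwa [mem_sphere_zero_iff_norm] at hw₀S, ?_⟩
      rw [← hQeval, ← hQeval]
      exact hle
    set Cset : Set (ℝ × ℂ) :=
      ((Set.Icc (0 : ℝ) 1) ×ˢ Metric.sphere (0 : ℂ) r') ∩ {p | ‖F p‖ ≤ ‖F (p.1, 0)‖} with hCdef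
    have hCcomp : IsCompact Cset := by
      apply IsCompact.inter_right ((isCompact_Icc).prod (isCompact_sphere _ _))
      exact isClosed_le hFcont.norm
        ((hFcont.comp (continuous_fst.prodMk continuous_const : Continuous fun p : ℝ × ℂ => ((p.1, 0) : ℝ × ℂ))).norm)
    have hproj : IsClosed (Prod.fst '' Cset) := (hCcomp.image continuous_fst).isClosed
    have hsub : Set.Ioc (0 : ℝ) 1 ⊆ Prod.fst '' Cset := by
      rintro ε ⟨hε0, hε1⟩
      obtain ⟨w, hwn, hle⟩ := claimA ε hε0
      exact ⟨(ε, w), ⟨⟨⟨hε0.le, hε1⟩, by rwa [mem_sphere_zero_iff_norm]⟩, hle⟩, rfl⟩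
    have h0mem : (0 : ℝ) ∈ Prod.fst '' Cset := by
      have h0cl : (0 : ℝ) ∈ closure (Set.Ioc (0 : ℝ) 1) := by
        rw [closure_Ioc (by norm_num : (0 : ℝ) ≠ 1)]
        exact ⟨le_refl 0, by norm_num⟩
      exact hproj.closure_subset ((closure_mono hsub) h0cl)
    obtain ⟨⟨ε₀, w⟩, ⟨⟨-, hwS⟩, hwle⟩, hfst⟩ := h0mem
    simp only at hfst
    subst hfst
    have hq00 : q.eval 0 = 0 := by
      have hxx : (fun j => x j + u j * 0) = x := funext fun j => by simp
      rw [hqeval, hxx, ← key]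
      exact hgx
    have hwle2 : ‖F (0, w)‖ ≤ ‖F (0, 0)‖ := hwle
    rw [hF0 w, hF0 0, hq00, norm_zero] at hwle2
    have : q.eval w = 0 := norm_le_zero_iff.mp hwle2
    exact hqcirc w (by rwa [mem_sphere_zero_iff_norm] at hwS) this
  · -- 0 < ζ.im
    intro x hx
    rw [key]
    apply hf
    intro i
    induction i using Fin.lastCases with
    | last => simpa using hζpos
    | cast j => simpa using hx j
end

section
/- Let n ≥ 1 and let G ≤ S_n be a permutation group. Suppose that for every multiaffine G-invariant polynomial f ∈ ℂ[z_1,…,z_n] and every ζ_1,…,ζ_n in the open upper half-plane H there exists ζ ∈ H such that f(ζ_1,…,ζ_n) = f(ζ,…,ζ). Then G acts transitively on {1,…,n}. -/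
open MvPolynomial
open scoped Classical

/-- If every multiaffine G-invariant polynomial satisfies the coincidence property
on the open upper half-plane, then G acts transitively on {1,…,n}. -/
theorem coincidence_property_implies_transitive
    (n : ℕ) (hn : 1 ≤ n) (G : Subgroup (Equiv.Perm (Fin n)))
    (hG : ∀ f : MvPolynomial (Fin n) ℂ, IsMultiaffine f →
      (∀ σ ∈ G, rename ⇑σ f = f) →
      ∀ ζ : Fin n → ℂ, (∀ i, 0 < (ζ i).im) →
        ∃ z : ℂ, 0 < z.im ∧ eval ζ f = eval (fun _ => z) f) :
    ∀ i j : Fin n, ∃ σ ∈ G, σ i = j := by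
  intro i j
  by_contra hcon
  push_neg at hcon
  set A : Finset (Fin n) := Finset.univ.filter
    (fun k => ∃ σ ∈ G, (σ : Equiv.Perm (Fin n)) i = k) with hA
  set B : Finset (Fin n) := Finset.univ.filter
    (fun k => ∃ σ ∈ G, (σ : Equiv.Perm (Fin n)) j = k) with hB
  have hiA : i ∈ A := by
    simp only [hA, Finset.mem_filter, Finset.mem_univ, true_and]
    exact ⟨1, G.one_mem, rfl⟩
  have hjB : j ∈ B := by
    simp only [hB, Finset.mem_filter, Finset.mem_univ, true_and]
    exact ⟨1, G.one_mem, rfl⟩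
  have hdisj : ∀ k, k ∈ A → k ∉ B := by
    intro k hkA hkB
    simp only [hA, hB, Finset.mem_filter, Finset.mem_univ, true_and] at hkA hkB
    obtain ⟨σ, hσ, hσk⟩ := hkA
    obtain ⟨τ, hτ, hτk⟩ := hkB
    exact hcon (τ⁻¹ * σ) (G.mul_mem (G.inv_mem hτ) hσ)
      (by simp [Equiv.Perm.mul_apply, hσk, ← hτk])
  set f : MvPolynomial (Fin n) ℂ :=
    (B.card : ℂ) • ∑ k ∈ A, X k - (A.card : ℂ) • ∑ k ∈ B, X k with hf
  have hsumdeg : ∀ S : Finset (Fin n),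
      (∑ k ∈ S, X k : MvPolynomial (Fin n) ℂ).totalDegree ≤ 1 := by
    intro S
    refine le_trans (totalDegree_finset_sum _ _) (Finset.sup_le fun k _ => ?_)
    simp [totalDegree_X]
  have hma : IsMultiaffine f := by
    intro k
    refine le_trans (degreeOf_le_totalDegree f k) ?_
    rw [hf, sub_eq_add_neg, ← neg_smul]
    refine le_trans (totalDegree_add _ _) ?_
    exact max_le (le_trans (totalDegree_smul_le _ _) (hsumdeg A))
      (le_trans (totalDegree_smul_le _ _) (hsumdeg B))
  have himg : ∀ σ : Equiv.Perm (Fin n), σ ∈ G → ∀ l : Fin n,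
      (∀ S : Finset (Fin n),
        (S = Finset.univ.filter (fun k => ∃ τ ∈ G, (τ : Equiv.Perm (Fin n)) l = k)) →
        S.image ⇑σ = S) := by
    intro σ hσ l S hS
    ext k
    simp only [hS, Finset.mem_image, Finset.mem_filter, Finset.mem_univ, true_and]
    constructor
    · rintro ⟨m, ⟨τ, hτ, rfl⟩, rfl⟩
      exact ⟨σ * τ, G.mul_mem hσ hτ, rfl⟩
    · rintro ⟨τ, hτ, rfl⟩
      exact ⟨σ⁻¹ (τ l), ⟨σ⁻¹ * τ, G.mul_mem (G.inv_mem hσ) hτ, rfl⟩, by simp⟩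
  have hsumren : ∀ (σ : Equiv.Perm (Fin n)) (S : Finset (Fin n)), S.image ⇑σ = S →
      rename ⇑σ (∑ k ∈ S, X k : MvPolynomial (Fin n) ℂ) = ∑ k ∈ S, X k := by
    intro σ S hS
    rw [map_sum]
    simp only [rename_X]
    conv_rhs => rw [← hS]
    exact (Finset.sum_image (g := ⇑σ) (f := fun k => (X k : MvPolynomial (Fin n) ℂ))
      (fun x _ y _ h => σ.injective h)).symm
  have hinv : ∀ σ ∈ G, rename ⇑σ f = f := by
    intro σ hσ
    rw [hf, map_sub, map_smul, map_smul,
      hsumren σ A (himg σ hσ i A hA), hsumren σ B (himg σ hσ j B hB)]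
  have heval : ∀ x : Fin n → ℂ,
      eval x f = (B.card : ℂ) * ∑ k ∈ A, x k - (A.card : ℂ) * ∑ k ∈ B, x k := by
    intro x
    simp [hf, smul_eq_C_mul, map_sum]
  set ζ : Fin n → ℂ := fun k => if k ∈ A then Complex.I else 2 * Complex.I with hζ
  have hζim : ∀ k, 0 < (ζ k).im := by
    intro k
    simp only [hζ]
    split <;> simp
  obtain ⟨z, hz, hev⟩ := hG f hma hinv ζ hζim
  have hevζ : eval ζ f = -((A.card : ℂ) * B.card) * Complex.I := by
    rw [heval]
    have e1 : ∀ k ∈ A, ζ k = Complex.I := fun k hk => by simp [hζ, hk]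
    have e2 : ∀ k ∈ B, ζ k = 2 * Complex.I := fun k hk => by
      simp only [hζ]
      rw [if_neg (fun h => hdisj k h hk)]
    have h1 : ∑ k ∈ A, ζ k = (A.card : ℂ) * Complex.I := by
      rw [Finset.sum_congr rfl e1, Finset.sum_const, nsmul_eq_mul]
    have h2 : ∑ k ∈ B, ζ k = (B.card : ℂ) * (2 * Complex.I) := by
      rw [Finset.sum_congr rfl e2, Finset.sum_const, nsmul_eq_mul]
    rw [h1, h2]
    ring
  have hevz : eval (fun _ => z) f = 0 := by
    rw [heval]
    simp [Finset.sum_const]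
    ring
  rw [hevζ, hevz] at hev
  have h0 : ((A.card : ℂ) * B.card) * Complex.I = 0 := by linear_combination -hev
  have h0' : (A.card : ℂ) * B.card = 0 := by
    rcases mul_eq_zero.mp h0 with h | h
    · exact h
    · exact absurd h Complex.I_ne_zero
  rcases mul_eq_zero.mp h0' with h | h
  · exact absurd (Nat.cast_eq_zero.mp h) (Finset.card_ne_zero_of_mem hiA)
  · exact absurd (Nat.cast_eq_zero.mp h) (Finset.card_ne_zero_of_mem hjB)
end

section
/- Let n ≥ 1 and let G ≤ S_n be a permutation group. Suppose that for every multiaffine G-invariant polynomial f ∈ ℂ[z_1,…,z_n] and every ζ_1,…,ζ_n in the open upper half-plane H there exists ζ ∈ H such that f(ζ_1,…,ζ_n) = f(ζ,…,ζ). Then the polynomial F(z_1,…,z_n,w_1,…,w_n) = (1/|G|) ∑_{σ∈G} ∏_{j=1}^n (z_{σ(j)} + w_j) is stable, i.e., nonvanishing whenever all of z_1,…,z_n,w_1,…,w_n lie in H. -/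
open MvPolynomial
open scoped Classical

/-- If every multiaffine G-invariant polynomial satisfies the coincidence property
on the open upper half-plane, then the polynomial
`F(z,w) = (1/|G|) ∑_{σ ∈ G} ∏_j (z_{σ(j)} + w_j)` is stable. -/
theorem coincidence_property_implies_F_stable
    (n : ℕ) (hn : 1 ≤ n) (G : Subgroup (Equiv.Perm (Fin n)))
    (hG : ∀ f : MvPolynomial (Fin n) ℂ, IsMultiaffine f →
      (∀ σ ∈ G, rename ⇑σ f = f) →
      ∀ ζ : Fin n → ℂ, (∀ i, 0 < (ζ i).im) →
        ∃ z : ℂ, 0 < z.im ∧ eval ζ f = eval (fun _ => z) f) :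
    IsStable ((Nat.card G : ℂ)⁻¹ • ∑ σ : G, ∏ j : Fin n,
      (X (Sum.inl ((σ : Equiv.Perm (Fin n)) j)) + X (Sum.inr j) :
        MvPolynomial (Fin n ⊕ Fin n) ℂ)) := by
  intro x hx
  set w : Fin n → ℂ := fun j => x (Sum.inr j) with hw
  set f : MvPolynomial (Fin n) ℂ :=
    ∑ σ : G, ∏ j : Fin n, (X ((σ : Equiv.Perm (Fin n)) j) + C (w j)) with hf
  have hcard : (Nat.card G : ℂ) ≠ 0 := by
    exact_mod_cast Nat.cast_ne_zero.mpr Nat.card_pos.ne'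
  have hma : IsMultiaffine f := by
    intro i
    refine le_trans (degreeOf_sum_le _ _ _) ?_
    simp only [Finset.sup_le_iff]
    intro σ _
    refine le_trans (degreeOf_prod_le _ _ _) ?_
    have h1 : ∀ j : Fin n,
        degreeOf i (X ((σ : Equiv.Perm (Fin n)) j) + C (w j) : MvPolynomial (Fin n) ℂ)
          ≤ if (σ : Equiv.Perm (Fin n)) j = i then 1 else 0 := by
      intro j
      refine le_trans (degreeOf_add_le _ _ _) ?_
      by_cases h : (σ : Equiv.Perm (Fin n)) j = i
      · simp [h, degreeOf_X, degreeOf_C]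
      · simp [degreeOf_C, degreeOf_X, Ne.symm h]
    refine le_trans (Finset.sum_le_sum fun j _ => h1 j) ?_
    have : ∀ j : Fin n, ((σ : Equiv.Perm (Fin n)) j = i) =
        (j = (σ : Equiv.Perm (Fin n))⁻¹ i) := by
      intro j
      exact propext Equiv.Perm.eq_inv_iff_eq.symm
    simp only [this]
    rw [Finset.sum_ite_eq' Finset.univ ((σ : Equiv.Perm (Fin n))⁻¹ i) (fun _ => 1)]
    simp
  have hinv : ∀ τ ∈ G, rename ⇑τ f = f := by
    intro τ hτ
    rw [hf, map_sum]
    have step : ∀ σ : G,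
        rename ⇑τ (∏ j : Fin n, (X ((σ : Equiv.Perm (Fin n)) j) + C (w j)))
          = ∏ j : Fin n,
            (X ((((⟨τ, hτ⟩ : G) * σ : G) : Equiv.Perm (Fin n)) j) + C (w j)) := by
      intro σ
      rw [map_prod]
      refine Finset.prod_congr rfl fun j _ => ?_
      simp [rename_X, rename_C, Equiv.Perm.mul_apply]
    rw [Finset.sum_congr rfl fun σ _ => step σ]
    exact Fintype.sum_equiv (Equiv.mulLeft (⟨τ, hτ⟩ : G)) _ _ (fun σ => rfl)
  obtain ⟨ζ, hζ, heq⟩ := hG f hma hinv (fun i => x (Sum.inl i)) (fun i => hx _)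
  have hevalF : eval x ((Nat.card G : ℂ)⁻¹ • ∑ σ : G, ∏ j : Fin n,
      (X (Sum.inl ((σ : Equiv.Perm (Fin n)) j)) + X (Sum.inr j) :
        MvPolynomial (Fin n ⊕ Fin n) ℂ))
      = (Nat.card G : ℂ)⁻¹ * eval (fun i => x (Sum.inl i)) f := by
    rw [smul_eval, hf, map_sum, map_sum]
    congr 1
    refine Finset.sum_congr rfl fun σ _ => ?_
    rw [map_prod, map_prod]
    exact Finset.prod_congr rfl fun j _ => by simp [hw]
  have hconst : eval (fun _ => ζ) f = (Nat.card G : ℂ) * ∏ j : Fin n, (ζ + w j) := by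
    rw [hf, map_sum]
    have : ∀ σ : G, eval (fun _ => ζ)
        (∏ j : Fin n, (X ((σ : Equiv.Perm (Fin n)) j) + C (w j)))
        = ∏ j : Fin n, (ζ + w j) := by
      intro σ
      rw [map_prod]
      exact Finset.prod_congr rfl fun j _ => by simp
    rw [Finset.sum_congr rfl fun σ _ => this σ, Finset.sum_const, Finset.card_univ,
      Nat.card_eq_fintype_card, nsmul_eq_mul]
  have hprod : (∏ j : Fin n, (ζ + w j)) ≠ 0 := by
    refine Finset.prod_ne_zero_iff.mpr fun j _ => ?_
    have : 0 < (ζ + w j).im := by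
      simp only [Complex.add_im]
      exact add_pos hζ (hx (Sum.inr j))
    exact fun h => by simp [h] at this
  rw [hevalF, heq, hconst, ← mul_assoc, inv_mul_cancel₀ hcard, one_mul]
  exact hprod
end

section
/- Let n ≥ 1 and let G ≤ S_n be a permutation group. Suppose that for every multiaffine G-invariant polynomial f ∈ ℂ[z_1,…,z_n] and every ζ_1,…,ζ_n in the open upper half-plane H there exists ζ ∈ H such that f(ζ_1,…,ζ_n) = f(ζ,…,ζ). Then the G-symmetrizer T_G = (1/|G|) ∑_{σ∈G} σ maps every stable multiaffine polynomial in ℂ[z_1,…,z_n] to a stable polynomial. -/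
open MvPolynomial
open scoped Classical

/-- If every multiaffine G-invariant polynomial satisfies the coincidence property
on the open upper half-plane, then the G-symmetrizer preserves stability of
multiaffine polynomials. -/
theorem coincidence_property_implies_symmetrizer_preserves_stability
    (n : ℕ) (hn : 1 ≤ n) (G : Subgroup (Equiv.Perm (Fin n)))
    (hG : ∀ f : MvPolynomial (Fin n) ℂ, IsMultiaffine f →
      (∀ σ ∈ G, rename ⇑σ f = f) →
      ∀ ζ : Fin n → ℂ, (∀ i, 0 < (ζ i).im) →
        ∃ z : ℂ, 0 < z.im ∧ eval ζ f = eval (fun _ => z) f) :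
    ∀ f : MvPolynomial (Fin n) ℂ, IsMultiaffine f → IsStable f →
      IsStable (symmG G f) := by
  intro f hf hs x hx
  have hcardpos : 0 < Nat.card G := Nat.card_pos
  have hc : (Nat.card G : ℂ) ≠ 0 := Nat.cast_ne_zero.mpr hcardpos.ne'
  -- evaluation at a constant point
  have hconst : ∀ z : ℂ, eval (fun _ => z) (symmG G f) = eval (fun _ => z) f := by
    intro z
    have : ∀ σ : G, eval (fun _ => z) (rename (⇑(σ : Equiv.Perm (Fin n))) f)
        = eval (fun _ => z) f := by
      intro σ; rw [eval_rename]; rfl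
    simp only [symmG, smul_eq_C_mul, map_mul, eval_C, map_sum, this,
      Finset.sum_const, Finset.card_univ, nsmul_eq_mul]
    rw [← Nat.card_eq_fintype_card, ← mul_assoc, inv_mul_cancel₀ hc, one_mul]
  -- multiaffine
  have hma : IsMultiaffine (symmG G f) := by
    intro i
    rw [symmG, smul_eq_C_mul]
    refine (degreeOf_C_mul_le _ _ _).trans ?_
    refine (degreeOf_sum_le _ _ _).trans ?_
    refine Finset.sup_le fun σ _ => ?_
    have := degreeOf_rename_of_injective
      (p := f) (f := ⇑(σ : Equiv.Perm (Fin n)))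
      (σ : Equiv.Perm (Fin n)).injective ((σ : Equiv.Perm (Fin n)).symm i)
    rw [Equiv.apply_symm_apply] at this
    rw [this]
    exact hf _
  -- G-invariance
  have hinv : ∀ τ ∈ G, rename ⇑τ (symmG G f) = symmG G f := by
    intro τ hτ
    simp only [symmG, smul_eq_C_mul, map_mul, rename_C, map_sum]
    congr 1
    have : ∀ σ : G, rename ⇑τ (rename (⇑(σ : Equiv.Perm (Fin n))) f)
        = rename (⇑((⟨τ, hτ⟩ * σ : G) : Equiv.Perm (Fin n))) f := by
      intro σ
      rw [rename_rename]
      rfl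
    simp only [this]
    exact Fintype.sum_equiv (Equiv.mulLeft (⟨τ, hτ⟩ : G)) _ _ (fun σ => rfl)
  obtain ⟨z, hz, heq⟩ := hG _ hma hinv x hx
  rw [heq, hconst]
  exact hs _ (fun _ => hz)
end
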